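/- Let F be a family of closed bounded intervals in ℝ with the property that every infinite sequence of members of F contains two distinct members with nonempty intersection. Then F can be pierced by finitely many points. -/

import Mathlib

open Set

/-- An axis-parallel box in `ℝ^d`: a product of closed bounded intervals. -/
def IsBox {d : ℕ} (B : Set (Fin d → ℝ)) : Prop :=
  ∃ a b : Fin d → ℝ, (∀ i, a i ≤ b i) ∧ B = {x | ∀ i, x i ∈ Set.Icc (a i) (b i)}

/-- An axis-parallel `k`-flat in `ℝ^d`: coordinates in a set `I` of size `d - k` are fixed. -/
def IsAxisFlat {d : ℕ} (k : ℕ) (K : Set (Fin d → ℝ)) : Prop :=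
  ∃ (I : Finset (Fin d)) (c : Fin d → ℝ), I.card = d - k ∧ K = {x | ∀ i ∈ I, x i = c i}

/-- An axis-parallel hyperplane in `ℝ^d`. -/
def IsAxisHyperplane {d : ℕ} (H : Set (Fin d → ℝ)) : Prop :=
  ∃ (i : Fin d) (c : ℝ), H = {x | x i = c}

/-- `F` is pierceable by finitely many axis-parallel `k`-flats. -/
def PiercedByFlats {d : ℕ} (k : ℕ) (F : Set (Set (Fin d → ℝ))) : Prop :=
  ∃ K : Finset (Set (Fin d → ℝ)), (∀ f ∈ K, IsAxisFlat k f) ∧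
    ∀ B ∈ F, ∃ f ∈ K, (B ∩ f).Nonempty

/-- `F` is pierceable by finitely many axis-parallel hyperplanes. -/
def PiercedByHyperplanes {d : ℕ} (F : Set (Set (Fin d → ℝ))) : Prop :=
  ∃ H : Finset (Set (Fin d → ℝ)), (∀ h ∈ H, IsAxisHyperplane h) ∧
    ∀ B ∈ F, ∃ h ∈ H, (B ∩ h).Nonempty

theorem stmt1 (F : Set (Set ℝ))
    (hbox : ∀ I ∈ F, ∃ a b : ℝ, a ≤ b ∧ I = Set.Icc a b)
    (hprop : ∀ f : ℕ → Set ℝ, (∀ n, f n ∈ F) →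
      ∃ i j : ℕ, i ≠ j ∧ (f i ∩ f j).Nonempty) :
    ∃ P : Finset ℝ, ∀ I ∈ F, ∃ p ∈ P, p ∈ I := by
  classical
  by_contra hcon
  have hex : ∀ I : Set ℝ, ∃ p : ℝ × ℝ, I ∈ F → p.1 ≤ p.2 ∧ I = Set.Icc p.1 p.2 := by
    intro I
    by_cases h : I ∈ F
    · obtain ⟨a, b, hab, hI⟩ := hbox I h
      exact ⟨(a, b), fun _ => ⟨hab, hI⟩⟩
    · exact ⟨(0, 0), fun h' => absurd h' h⟩
  let lo : Set ℝ → ℝ := fun I => (hex I).choose.1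
  let hi : Set ℝ → ℝ := fun I => (hex I).choose.2
  have hspec : ∀ I ∈ F, lo I ≤ hi I ∧ I = Set.Icc (lo I) (hi I) :=
    fun I hI => (hex I).choose_spec hI
  -- key lemma: no sequence of members of F that is pairwise separated
  have key : ∀ f : ℕ → Set ℝ, (∀ n, f n ∈ F) →
      (∀ i j, i < j → hi (f i) < lo (f j) ∨ hi (f j) < lo (f i)) → False := by
    intro f hf hsep
    obtain ⟨i, j, hij, x, hx⟩ := hprop f hf
    have hxi := hx.1
    have hxj := hx.2
    rw [(hspec _ (hf i)).2] at hxi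
    rw [(hspec _ (hf j)).2] at hxj
    obtain ⟨h1, h2⟩ := hxi
    obtain ⟨h3, h4⟩ := hxj
    rcases lt_or_gt_of_ne hij with h | h
    · rcases hsep i j h with h' | h' <;> linarith
    · rcases hsep j i h with h' | h' <;> linarith
  -- descending chain lemma: a nonempty "progressive" subfamily is impossible
  have desc : ∀ S : Set (Set ℝ), S ⊆ F → S.Nonempty →
      (∀ J ∈ S, ∃ K, K ∈ S ∧ hi K < lo J) → False := by
    intro S hSF hSne hstep
    obtain ⟨I0, hI0⟩ := hSne
    let f : ℕ → Set ℝ := fun n =>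
      Nat.rec I0 (fun _ J => if h : J ∈ S then (hstep J h).choose else I0) n
    have hfsucc : ∀ n, f (n+1) = if h : f n ∈ S then (hstep (f n) h).choose else I0 :=
      fun _ => rfl
    have hfS : ∀ n, f n ∈ S := by
      intro n
      induction n with
      | zero => exact hI0
      | succ n ih =>
        rw [hfsucc n, dif_pos ih]
        exact (hstep (f n) ih).choose_spec.1
    have hdec : ∀ n, hi (f (n+1)) < lo (f n) := by
      intro n
      rw [hfsucc n, dif_pos (hfS n)]
      exact (hstep (f n) (hfS n)).choose_spec.2
    have hpair : ∀ i d, hi (f (i + d + 1)) < lo (f i) := by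
      intro i d
      induction d with
      | zero => exact hdec i
      | succ d ih =>
        have h1 := hdec (i + d + 1)
        have h2 := (hspec _ (hSF (hfS (i + d + 1)))).1
        have : i + (d + 1) + 1 = (i + d + 1) + 1 := by omega
        rw [this]
        linarith
    apply key f (fun n => hSF (hfS n))
    intro i j hij
    right
    obtain ⟨d, rfl⟩ : ∃ d, j = i + d + 1 := ⟨j - i - 1, by omega⟩
    exact hpair i d
  have hFne : F.Nonempty := by
    rcases Set.eq_empty_or_nonempty F with h | h
    · exact absurd ⟨(∅ : Finset ℝ), fun I hI => by rw [h] at hI; exact absurd hI (Set.notMem_empty I)⟩ hcon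
    · exact h
  by_cases hbdd : BddBelow (hi '' F)
  swap
  · -- hi-values unbounded below: direct descending chain
    rw [not_bddBelow_iff] at hbdd
    apply desc F (subset_refl F) hFne
    intro J hJ
    obtain ⟨y, hy, hlt⟩ := hbdd (lo J)
    obtain ⟨K, hK, rfl⟩ := hy
    exact ⟨K, hK, hlt⟩
  -- main case: build the greedy tower
  let G : ℕ → Set (Set ℝ) := fun n =>
    Nat.rec F (fun _ Gn => {I | I ∈ Gn ∧ sInf (hi '' Gn) < lo I}) n
  let β : ℕ → ℝ := fun n => sInf (hi '' G n)
  have hmem : ∀ n (I : Set ℝ), I ∈ G (n+1) ↔ I ∈ G n ∧ β n < lo I := fun n I => Iff.rfl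
  have hGF : ∀ n, G n ⊆ F := by
    intro n
    induction n with
    | zero => exact subset_refl F
    | succ n ih => exact fun I hI => ih ((hmem n I).mp hI).1
  have hbddG : ∀ n, BddBelow (hi '' G n) := fun n => hbdd.mono (Set.image_mono (hGF n))
  have hPier : ∀ n, ¬ ∃ P : Finset ℝ, ∀ I ∈ G n, ∃ p ∈ P, p ∈ I := by
    intro n
    induction n with
    | zero => exact hcon
    | succ n ih =>
      rintro ⟨P, hP⟩
      apply ih
      refine ⟨insert (β n) P, ?_⟩
      intro I hI
      by_cases h : β n < lo I
      · obtain ⟨p, hp, hpI⟩ := hP I ((hmem n I).mpr ⟨hI, h⟩)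
        exact ⟨p, Finset.mem_insert_of_mem hp, hpI⟩
      · refine ⟨β n, Finset.mem_insert_self _ _, ?_⟩
        have h2 := csInf_le (hbddG n) (Set.mem_image_of_mem hi hI)
        rw [(hspec I (hGF n hI)).2]
        exact ⟨le_of_not_gt h, h2⟩
  have hGne : ∀ n, (G n).Nonempty := by
    intro n
    rcases Set.eq_empty_or_nonempty (G n) with h | h
    · exact absurd ⟨(∅ : Finset ℝ), fun I hI => by rw [h] at hI; exact absurd hI (Set.notMem_empty I)⟩ (hPier n)
    · exact h
  have hβmono : Monotone β := by
    apply monotone_nat_of_le_succ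
    intro n
    apply csInf_le_csInf (hbddG n) ((hGne (n+1)).image hi)
    exact Set.image_mono (fun I hI => ((hmem n I).mp hI).1)
  by_cases hC : ∀ n, ∃ m, β n < β m
  · -- infinitely many strict increases: increasing separated sequence
    have hcm : ∀ n, n < (hC n).choose := by
      intro n
      by_contra h
      exact absurd (hC n).choose_spec (not_lt.mpr (hβmono (not_lt.mp h)))
    have hKex : ∀ n, ∃ K, K ∈ G n ∧ hi K < β (hC n).choose := by
      intro n
      obtain ⟨y, hy, hlt⟩ := exists_lt_of_csInf_lt ((hGne n).image hi) (hC n).choose_spec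
      obtain ⟨K, hK, rfl⟩ := hy
      exact ⟨K, hK, hlt⟩
    let idx : ℕ → ℕ := fun i => Nat.rec 0 (fun _ n => (hC n).choose + 1) i
    have hidx : ∀ i, idx (i+1) = (hC (idx i)).choose + 1 := fun _ => rfl
    have hidxmono : StrictMono idx := by
      apply strictMono_nat_of_lt_succ
      intro i
      rw [hidx]
      exact Nat.lt_succ_of_lt (hcm (idx i))
    let K : ℕ → Set ℝ := fun i => (hKex (idx i)).choose
    have hKmem : ∀ i, K i ∈ G (idx i) := fun i => (hKex (idx i)).choose_spec.1
    have hKhi : ∀ i, hi (K i) < β ((hC (idx i)).choose) := fun i => (hKex (idx i)).choose_spec.2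
    have hKlo : ∀ i, β ((hC (idx i)).choose) < lo (K (i+1)) := by
      intro i
      have h1 := hKmem (i+1)
      rw [hidx i] at h1
      exact ((hmem _ _).mp h1).2
    apply key K (fun i => hGF (idx i) (hKmem i))
    intro i j hij
    left
    obtain ⟨j', rfl, hij'⟩ : ∃ j', j = j' + 1 ∧ i ≤ j' := ⟨j - 1, by omega, by omega⟩
    have h1 := hKhi i
    have h3 := hKlo j'
    have h2 : β ((hC (idx i)).choose) ≤ β ((hC (idx j')).choose) := by
      apply hβmono
      have := hidxmono.monotone (Nat.succ_le_succ hij')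
      rw [hidx, hidx] at this
      omega
    linarith
  · -- β eventually constant: progressive subfamily
    push_neg at hC
    obtain ⟨N, hN⟩ := hC
    apply desc (G (N+1)) (hGF (N+1)) (hGne (N+1))
    intro J hJ
    have hJ2 : β N < lo J := ((hmem N J).mp hJ).2
    have hle : β (N+1) ≤ β N := hN (N+1)
    obtain ⟨y, hy, hlt⟩ := exists_lt_of_csInf_lt ((hGne (N+1)).image hi) (lt_of_le_of_lt hle hJ2)
    obtain ⟨K, hK, rfl⟩ := hy
    exact ⟨K, hK, hlt⟩
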